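/- Let $X$ be a $p \times q$ real (or complex) matrix of rank exactly 2, with $p, q \geq 2$. Let $P$ be the $p \times p$ skew-symmetric matrix of $2\times 2$ minors coming from a rank-2 factorization adapted to the column space of $X$, and $Q$ similarly for the row space. Then for each $t \neq 0$, the $(p+q)\times(p+q)$ block matrix $V = \begin{pmatrix} tP & X \\ -X^T & t^{-1}Q \end{pmatrix}$ is skew-symmetric of rank 2. -/
import Mathlib


open Matrix

theorem fiber_skew_rank_two (p q : ℕ) (hp : 2 ≤ p) (hq : 2 ≤ q)
    (X : Matrix (Fin p) (Fin q) ℝ) (hX : X.rank = 2)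
    (A : Matrix (Fin p) (Fin 2) ℝ) (B : Matrix (Fin 2) (Fin q) ℝ)
    (hAB : X = A * B) (t : ℝ) (ht : t ≠ 0) :
    letI J : Matrix (Fin 2) (Fin 2) ℝ := !![0, 1; -1, 0]
    letI P : Matrix (Fin p) (Fin p) ℝ := A * J * Aᵀ
    letI Q : Matrix (Fin q) (Fin q) ℝ := Bᵀ * J * B
    letI V : Matrix (Fin p ⊕ Fin q) (Fin p ⊕ Fin q) ℝ :=
      Matrix.fromBlocks (t • P) X (-Xᵀ) (t⁻¹ • Q)
    Vᵀ = -V ∧ V.rank = 2 := by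
  set J : Matrix (Fin 2) (Fin 2) ℝ := !![0, 1; -1, 0] with hJdef
  set P : Matrix (Fin p) (Fin p) ℝ := A * J * Aᵀ with hPdef
  set Q : Matrix (Fin q) (Fin q) ℝ := Bᵀ * J * B with hQdef
  set V : Matrix (Fin p ⊕ Fin q) (Fin p ⊕ Fin q) ℝ :=
    Matrix.fromBlocks (t • P) X (-Xᵀ) (t⁻¹ • Q) with hVdef
  have hJt : Jᵀ = -J := by
    ext i j
    fin_cases i <;> fin_cases j <;>
      simp [hJdef, Matrix.transpose_apply]
  constructor
  · have hPt : Pᵀ = -P := by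
      rw [hPdef, transpose_mul, transpose_mul, transpose_transpose, hJt]
      simp [Matrix.mul_assoc]
    have hQt : Qᵀ = -Q := by
      rw [hQdef, transpose_mul, transpose_mul, transpose_transpose, hJt]
      simp [Matrix.mul_assoc]
    rw [hVdef, fromBlocks_transpose, fromBlocks_neg, transpose_smul, transpose_smul,
      hPt, hQt, transpose_neg, transpose_transpose, smul_neg, smul_neg, neg_neg]
  · set S : Matrix (Fin 2) (Fin 2) ℝ := !![t, 0; 0, 1] with hS
    set T : Matrix (Fin 2) (Fin 2) ℝ := !![0, t⁻¹; -1, 0] with hT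
    have hSt : Sᵀ = !![t, 0; 0, 1] := by
      ext i j
      fin_cases i <;> fin_cases j <;> simp [hS, Matrix.transpose_apply]
    have hTt : Tᵀ = !![0, -1; t⁻¹, 0] := by
      ext i j
      fin_cases i <;> fin_cases j <;> simp [hT, Matrix.transpose_apply]
    have hSJS : S * J * Sᵀ = t • J := by
      rw [hSt, hS, hJdef]
      ext i j
      fin_cases i <;> fin_cases j <;>
        simp [Matrix.mul_apply, Fin.sum_univ_two, Matrix.smul_apply]
    have hSJT : S * J * Tᵀ = 1 := by
      rw [hTt, hS, hJdef]
      ext i j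
      fin_cases i <;> fin_cases j <;>
        simp [Matrix.mul_apply, Fin.sum_univ_two, Matrix.one_apply, mul_inv_cancel₀ ht]
    have hTJS : T * J * Sᵀ = -1 := by
      rw [hSt, hT, hJdef]
      ext i j
      fin_cases i <;> fin_cases j <;>
        simp [Matrix.mul_apply, Fin.sum_univ_two, Matrix.one_apply, inv_mul_cancel₀ ht]
    have hTJT : T * J * Tᵀ = t⁻¹ • J := by
      rw [hTt, hT, hJdef]
      ext i j
      fin_cases i <;> fin_cases j <;>
        simp [Matrix.mul_apply, Fin.sum_univ_two, Matrix.smul_apply]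
    set C : Matrix (Fin p ⊕ Fin q) (Fin 2) ℝ := fromRows (A * S) (Bᵀ * T) with hC
    have h11 : A * S * J * (A * S)ᵀ = t • P := by
      rw [transpose_mul]
      calc A * S * J * (Sᵀ * Aᵀ) = A * (S * J * Sᵀ) * Aᵀ := by
            simp only [Matrix.mul_assoc]
        _ = t • P := by
            rw [hSJS, hPdef]
            simp only [Matrix.mul_smul, Matrix.smul_mul]
    have h12 : A * S * J * (Bᵀ * T)ᵀ = X := by
      rw [transpose_mul, transpose_transpose]
      calc A * S * J * (Tᵀ * B) = A * (S * J * Tᵀ) * B := by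
            simp only [Matrix.mul_assoc]
        _ = X := by rw [hSJT, Matrix.mul_one, hAB]
    have h21 : Bᵀ * T * J * (A * S)ᵀ = -Xᵀ := by
      rw [transpose_mul]
      calc Bᵀ * T * J * (Sᵀ * Aᵀ) = Bᵀ * (T * J * Sᵀ) * Aᵀ := by
            simp only [Matrix.mul_assoc]
        _ = -Xᵀ := by
            rw [hTJS, hAB, transpose_mul]
            simp [Matrix.mul_assoc]
    have h22 : Bᵀ * T * J * (Bᵀ * T)ᵀ = t⁻¹ • Q := by
      rw [transpose_mul, transpose_transpose]
      calc Bᵀ * T * J * (Tᵀ * B) = Bᵀ * (T * J * Tᵀ) * B := by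
            simp only [Matrix.mul_assoc]
        _ = t⁻¹ • Q := by
            rw [hTJT, hQdef]
            simp only [Matrix.mul_smul, Matrix.smul_mul]
    have hV : V = C * J * Cᵀ := by
      rw [hVdef, hC, fromRows_mul, transpose_fromRows, fromRows_mul_fromCols,
        h11, h12, h21, h22]
    have hle : V.rank ≤ 2 := by
      rw [hV]
      refine (rank_mul_le_left (C * J) Cᵀ).trans ?_
      simpa using rank_le_card_width (C * J)
    have hge : 2 ≤ V.rank := by
      set E : Matrix (Fin p) (Fin p ⊕ Fin q) ℝ :=
        (1 : Matrix (Fin p ⊕ Fin q) (Fin p ⊕ Fin q) ℝ).submatrix Sum.inl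
          (Equiv.refl _) with hE
      set F : Matrix (Fin p ⊕ Fin q) (Fin q) ℝ :=
        (1 : Matrix (Fin p ⊕ Fin q) (Fin p ⊕ Fin q) ℝ).submatrix (Equiv.refl _)
          Sum.inr with hF
      have hEVF : E * V * F = X := by
        rw [hE, hF, one_submatrix_mul, mul_submatrix_one]
        ext i j
        simp [hVdef]
      calc 2 = X.rank := hX.symm
        _ = (E * V * F).rank := by rw [hEVF]
        _ ≤ (E * V).rank := rank_mul_le_left _ _
        _ ≤ V.rank := rank_mul_le_right _ _
    omega
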